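/- Let V be a finite-dimensional real inner product space, W a finite group acting on V by linear isometries, ε : W → {±1} a group homomorphism, h a positive integer, and Λ a lattice in V with w(Λ) = Λ for all w ∈ W. Fix a ∈ Λ^∨ and define g : V → ℂ by g(ν) = ∑_{w ∈ W} ε(w) e^{−2πi (w(a), ν)/h}. If ν ∈ V is fixed by some affine transformation ν ↦ w₀(ν) + hβ with w₀ ∈ W, β ∈ Λ and ε(w₀) = −1 (i.e. w₀(ν) + hβ = ν), then g(ν) = 0. -/

import Mathlib

open scoped RealInnerProductSpace
open Complex

/-- Let `V` be a finite-dimensional real inner product space, `W` a finite group acting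
on `V` by linear isometries (via `ρ`), `ε : W → {±1}` a group homomorphism, `h` a
positive integer, and `Λ` a lattice in `V` (the `ℤ`-span of an `ℝ`-basis `b`) with
`w(Λ) = Λ` for all `w ∈ W`.  Fix `a ∈ Λ^∨` and define
`g(ν) = ∑_{w ∈ W} ε(w) e^{−2πi (w a, ν)/h}`.  If `ν ∈ V` is fixed by an affine
transformation `ν ↦ w₀ ν + h β` with `w₀ ∈ W`, `β ∈ Λ` and `ε(w₀) = −1`, then
`g(ν) = 0`. -/
theorem twisted_sum_vanishes_on_boundary
    {V : Type*} [NormedAddCommGroup V] [InnerProductSpace ℝ V] [FiniteDimensional ℝ V]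
    {ι : Type*} [Fintype ι] (b : Module.Basis ι ℝ V)
    {W : Type*} [Group W] [Fintype W]
    (ρ : W →* (V ≃ₗᵢ[ℝ] V)) (ε : W →* ℤˣ)
    (h : ℕ) (hh : 0 < h)
    (Λ : Submodule ℤ V) (hΛ : Λ = Submodule.span ℤ (Set.range b))
    (hinv : ∀ (w : W) (v : V), v ∈ Λ ↔ ρ w v ∈ Λ)
    (a : V) (ha : ∀ y ∈ Λ, ∃ n : ℤ, ⟪a, y⟫ = (n : ℝ))
    (g : V → ℂ)
    (hg : ∀ ν : V, g ν = ∑ w : W, ((ε w : ℤ) : ℂ) *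
        Complex.exp (-(2 * (Real.pi : ℂ) * Complex.I) * (⟪ρ w a, ν⟫ : ℂ) / (h : ℂ))) :
    ∀ (w₀ : W) (β : V), β ∈ Λ → ε w₀ = -1 → ∀ ν : V,
      ρ w₀ ν + (h : ℝ) • β = ν → g ν = 0 := by
  intro w₀ β hβ hε ν hν
  have hhC : (h : ℂ) ≠ 0 := by exact_mod_cast hh.ne'
  have key : ∀ w : W,
      Complex.exp (-(2 * (Real.pi : ℂ) * Complex.I) * (⟪ρ w a, ν⟫ : ℂ) / (h : ℂ)) =
      Complex.exp (-(2 * (Real.pi : ℂ) * Complex.I) * (⟪ρ (w₀⁻¹ * w) a, ν⟫ : ℂ) / (h : ℂ)) := by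
    intro w
    obtain ⟨n, hn⟩ := ha (ρ w⁻¹ β) ((hinv w⁻¹ β).1 hβ)
    have h2 : ρ w (ρ w⁻¹ β) = β := by
      have : ρ w * ρ w⁻¹ = 1 := by rw [← map_mul, mul_inv_cancel, map_one]
      calc ρ w (ρ w⁻¹ β) = (ρ w * ρ w⁻¹) β := rfl
        _ = β := by rw [this]; rfl
    have hβint : ⟪ρ w a, β⟫ = (n : ℝ) := by
      rw [← h2, LinearIsometryEquiv.inner_map_map, hn]
    have h3 : ρ w₀ (ρ (w₀⁻¹ * w) a) = ρ w a := by
      have : ρ w₀ * ρ (w₀⁻¹ * w) = ρ w := by rw [← map_mul, mul_inv_cancel_left]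
      calc ρ w₀ (ρ (w₀⁻¹ * w) a) = (ρ w₀ * ρ (w₀⁻¹ * w)) a := rfl
        _ = ρ w a := by rw [this]
    have h1 : ⟪ρ w a, ν⟫ = ⟪ρ (w₀⁻¹ * w) a, ν⟫ + (h : ℝ) * (n : ℝ) := by
      conv_lhs => rw [← hν]
      rw [inner_add_right, real_inner_smul_right, hβint, ← h3,
        LinearIsometryEquiv.inner_map_map]
    rw [h1]
    push_cast
    rw [show -(2 * (Real.pi : ℂ) * Complex.I) * ((⟪ρ (w₀⁻¹ * w) a, ν⟫ : ℂ) + (h : ℂ) * (n : ℂ)) / (h : ℂ)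
        = -(2 * (Real.pi : ℂ) * Complex.I) * (⟪ρ (w₀⁻¹ * w) a, ν⟫ : ℂ) / (h : ℂ)
          + (-n : ℤ) * (2 * (Real.pi : ℂ) * Complex.I) by push_cast; field_simp; ring]
    rw [Complex.exp_add, Complex.exp_int_mul_two_pi_mul_I, mul_one]
  have hsum : g ν = ∑ w : W, ((ε w : ℤ) : ℂ) *
      Complex.exp (-(2 * (Real.pi : ℂ) * Complex.I) * (⟪ρ (w₀⁻¹ * w) a, ν⟫ : ℂ) / (h : ℂ)) := by
    rw [hg ν]
    exact Finset.sum_congr rfl fun w _ => by rw [key w]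
  have hεw : ∀ w : W, ((ε w : ℤ) : ℂ) = -((ε (w₀⁻¹ * w) : ℤ) : ℂ) := by
    intro w
    have : ε w = ε w₀ * ε (w₀⁻¹ * w) := by rw [← map_mul, mul_inv_cancel_left]
    rw [this, hε]; push_cast; ring
  have hre : g ν = -g ν := by
    calc g ν = ∑ w : W, -(((ε (w₀⁻¹ * w) : ℤ) : ℂ) *
        Complex.exp (-(2 * (Real.pi : ℂ) * Complex.I) * (⟪ρ (w₀⁻¹ * w) a, ν⟫ : ℂ) / (h : ℂ))) := by
          rw [hsum]; exact Finset.sum_congr rfl fun w _ => by rw [hεw w]; ring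
      _ = -∑ w : W, (((ε (w₀⁻¹ * w) : ℤ) : ℂ) *
        Complex.exp (-(2 * (Real.pi : ℂ) * Complex.I) * (⟪ρ (w₀⁻¹ * w) a, ν⟫ : ℂ) / (h : ℂ))) := by
          rw [Finset.sum_neg_distrib]
      _ = -g ν := by
          rw [hg ν]
          congr 1
          exact Fintype.sum_equiv (Equiv.mulLeft w₀⁻¹) _ _ fun w => rfl
  linear_combination hre / 2
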